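/- Let p > 2 and θ ∈ (0,1). Define C_p = (1 − 2·(1/2)^{p/2})^{-1}. For any unit vector q ∈ ℝⁿ, let r = (1/2)·min over i of min{‖q − e_i‖₂², ‖q + e_i‖₂²}, where e_i are the standard basis vectors. Let Ω be a random subset of {1,…,n} including each index independently with probability θ. Then r ≤ (C_p/(θ(1−θ)))·(θ − E_Ω[‖q_Ω‖₂^p]). -/

import Mathlib

open Real Finset

/-- Mass of the Bernoulli-weighted powerset measure is 1. -/
lemma bern_mass {ι : Type*} [DecidableEq ι] (θ : ℝ) (s : Finset ι) :
    ∑ S ∈ s.powerset, θ ^ S.card * (1 - θ) ^ (s.card - S.card) = 1 := by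
  induction s using Finset.induction_on with
  | empty => simp
  | @insert a s ha ih =>
    rw [Finset.sum_powerset_insert ha]
    have h1 : ∀ T ∈ s.powerset, θ ^ T.card * (1 - θ) ^ ((insert a s).card - T.card)
        = (1 - θ) * (θ ^ T.card * (1 - θ) ^ (s.card - T.card)) := by
      intro T hT
      have hTs : T.card ≤ s.card := Finset.card_le_card (Finset.mem_powerset.mp hT)
      rw [Finset.card_insert_of_notMem ha]
      rw [Nat.succ_sub hTs, pow_succ]
      ring
    have h2 : ∀ T ∈ s.powerset, θ ^ (insert a T).card * (1 - θ) ^ ((insert a s).card - (insert a T).card)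
        = θ * (θ ^ T.card * (1 - θ) ^ (s.card - T.card)) := by
      intro T hT
      have haT : a ∉ T := fun h => ha (Finset.mem_powerset.mp hT h)
      rw [Finset.card_insert_of_notMem ha, Finset.card_insert_of_notMem haT]
      rw [Nat.succ_sub_succ]
      ring
    rw [Finset.sum_congr rfl h1, Finset.sum_congr rfl h2, ← Finset.mul_sum, ← Finset.mul_sum, ih]
    ring

/-- First moment. -/
lemma bern_mean {ι : Type*} [DecidableEq ι] (θ : ℝ) (s : Finset ι) (a : ι → ℝ) :
    ∑ S ∈ s.powerset, θ ^ S.card * (1 - θ) ^ (s.card - S.card) * (∑ i ∈ S, a i)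
      = θ * ∑ i ∈ s, a i := by
  induction s using Finset.induction_on with
  | empty => simp
  | @insert j s hj ih =>
    rw [Finset.sum_powerset_insert hj]
    have h1 : ∀ T ∈ s.powerset, θ ^ T.card * (1 - θ) ^ ((insert j s).card - T.card) * (∑ i ∈ T, a i)
        = (1 - θ) * (θ ^ T.card * (1 - θ) ^ (s.card - T.card) * (∑ i ∈ T, a i)) := by
      intro T hT
      have hTs : T.card ≤ s.card := Finset.card_le_card (Finset.mem_powerset.mp hT)
      rw [Finset.card_insert_of_notMem hj, Nat.succ_sub hTs, pow_succ]
      ring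
    have h2 : ∀ T ∈ s.powerset, θ ^ (insert j T).card * (1 - θ) ^ ((insert j s).card - (insert j T).card) * (∑ i ∈ insert j T, a i)
        = θ * (θ ^ T.card * (1 - θ) ^ (s.card - T.card) * (∑ i ∈ T, a i))
          + a j * θ * (θ ^ T.card * (1 - θ) ^ (s.card - T.card)) := by
      intro T hT
      have hjT : j ∉ T := fun h => hj (Finset.mem_powerset.mp hT h)
      rw [Finset.card_insert_of_notMem hj, Finset.card_insert_of_notMem hjT,
        Nat.succ_sub_succ, Finset.sum_insert hjT]
      ring
    rw [Finset.sum_congr rfl h1, Finset.sum_congr rfl h2, Finset.sum_add_distrib,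
      ← Finset.mul_sum, ← Finset.mul_sum, ih]
    have := bern_mass θ s
    rw [← Finset.mul_sum, this, Finset.sum_insert hj]
    ring

/-- Second moment. -/
lemma bern_sq {ι : Type*} [DecidableEq ι] (θ : ℝ) (s : Finset ι) (a : ι → ℝ) :
    ∑ S ∈ s.powerset, θ ^ S.card * (1 - θ) ^ (s.card - S.card) * (∑ i ∈ S, a i) ^ 2
      = θ ^ 2 * (∑ i ∈ s, a i) ^ 2 + θ * (1 - θ) * ∑ i ∈ s, a i ^ 2 := by
  induction s using Finset.induction_on with
  | empty => simp
  | @insert j s hj ih =>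
    rw [Finset.sum_powerset_insert hj]
    have h1 : ∀ T ∈ s.powerset, θ ^ T.card * (1 - θ) ^ ((insert j s).card - T.card) * (∑ i ∈ T, a i) ^ 2
        = (1 - θ) * (θ ^ T.card * (1 - θ) ^ (s.card - T.card) * (∑ i ∈ T, a i) ^ 2) := by
      intro T hT
      have hTs : T.card ≤ s.card := Finset.card_le_card (Finset.mem_powerset.mp hT)
      rw [Finset.card_insert_of_notMem hj, Nat.succ_sub hTs, pow_succ]
      ring
    have h2 : ∀ T ∈ s.powerset, θ ^ (insert j T).card * (1 - θ) ^ ((insert j s).card - (insert j T).card) * (∑ i ∈ insert j T, a i) ^ 2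
        = θ * (θ ^ T.card * (1 - θ) ^ (s.card - T.card) * (∑ i ∈ T, a i) ^ 2)
          + 2 * a j * θ * (θ ^ T.card * (1 - θ) ^ (s.card - T.card) * (∑ i ∈ T, a i))
          + a j ^ 2 * θ * (θ ^ T.card * (1 - θ) ^ (s.card - T.card)) := by
      intro T hT
      have hjT : j ∉ T := fun h => hj (Finset.mem_powerset.mp hT h)
      rw [Finset.card_insert_of_notMem hj, Finset.card_insert_of_notMem hjT,
        Nat.succ_sub_succ, Finset.sum_insert hjT]
      ring
    rw [Finset.sum_congr rfl h1, Finset.sum_congr rfl h2]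
    rw [Finset.sum_add_distrib, Finset.sum_add_distrib, ← Finset.mul_sum, ← Finset.mul_sum,
      ← Finset.mul_sum, ← Finset.mul_sum, ih, bern_mean θ s a, bern_mass θ s,
      Finset.sum_insert hj, Finset.sum_insert hj]
    ring

/-- Pointwise inequality: for `x ∈ [0,1]` and `s > 1`,
`x ^ s ≤ (1/2)^(s-1) * x + (1 - (1/2)^(s-1)) * x^2`. -/
lemma key_pointwise {s : ℝ} (hs : 1 < s) {x : ℝ} (hx0 : 0 ≤ x) (hx1 : x ≤ 1) :
    x ^ s ≤ (2 * ((1 : ℝ) / 2) ^ s) * x + (1 - 2 * ((1 : ℝ) / 2) ^ s) * x ^ 2 := by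
  set t : ℝ := s - 1 with ht
  have ht0 : 0 < t := by simp [ht]; linarith
  have hhalf : (2 : ℝ) * ((1 : ℝ) / 2) ^ s = ((1 : ℝ) / 2) ^ t := by
    have : s = 1 + t := by ring
    rw [this, Real.rpow_add (by norm_num : (0:ℝ) < 1/2), Real.rpow_one]
    ring
  have hd1 : ((1 : ℝ) / 2) ^ t ≤ 1 :=
    Real.rpow_le_one (by norm_num) (by norm_num) ht0.le
  have hd0 : (0 : ℝ) < ((1 : ℝ) / 2) ^ t := Real.rpow_pos_of_pos (by norm_num) t
  rw [hhalf]
  rcases eq_or_lt_of_le hx0 with h0 | hx0'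
  · rw [← h0, Real.zero_rpow (by linarith)]
    norm_num
  -- x > 0; reduce to x ^ t ≤ d + (1 - d) * x where d = (1/2)^t
  have hxs : x ^ s = x * x ^ t := by
    have : s = 1 + t := by ring
    rw [this, Real.rpow_add hx0', Real.rpow_one]
  have key : x ^ t ≤ ((1 : ℝ) / 2) ^ t + (1 - ((1 : ℝ) / 2) ^ t) * x := by
    rcases le_total x (1 / 2) with hle | hge
    · have h1 : x ^ t ≤ ((1 : ℝ) / 2) ^ t := Real.rpow_le_rpow hx0 hle ht0.le
      nlinarith
    · -- x ∈ [1/2, 1]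
      rcases le_total t 1 with htle | htge
      · -- Bernoulli for 0 < t ≤ 1
        have hb : x ^ t ≤ 1 + t * (x - 1) := by
          have := rpow_one_add_le_one_add_mul_self (s := x - 1) (by linarith) ht0.le htle
          simpa using this
        have hc : 1 - ((1 : ℝ) / 2) ^ t ≤ t := by
          have hexp : 1 - t ≤ ((1 : ℝ) / 2) ^ t := by
            rw [Real.rpow_def_of_pos (by norm_num : (0:ℝ) < 1/2)]
            have hlog : Real.log (1 / 2) = -Real.log 2 := by
              rw [one_div, Real.log_inv]
            have h2 : Real.log 2 ≤ 1 := by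
              have := Real.log_two_lt_d9
              linarith
            have := Real.add_one_le_exp (Real.log (1 / 2) * t)
            have : 1 + Real.log (1/2) * t ≤ Real.exp (Real.log (1/2) * t) := by linarith
            have hge2 : -t ≤ Real.log (1/2) * t := by
              rw [hlog]
              nlinarith
            linarith
          linarith
        nlinarith
      · -- convexity for t ≥ 1
        have hconv := convexOn_rpow htge
        have hx' : x = (2 * (1 - x)) • ((1:ℝ)/2) + (2 * x - 1) • (1:ℝ) := by
          simp [smul_eq_mul]; ring
        have hmem1 : ((1:ℝ)/2) ∈ Set.Ici (0:ℝ) := by norm_num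
        have hmem2 : (1:ℝ) ∈ Set.Ici (0:ℝ) := by norm_num
        have hla : (0:ℝ) ≤ 2 * (1 - x) := by linarith
        have hlb : (0:ℝ) ≤ 2 * x - 1 := by linarith
        have hsum : 2 * (1 - x) + (2 * x - 1) = 1 := by ring
        have := hconv.2 hmem1 hmem2 hla hlb hsum
        rw [← hx'] at this
        simp only [smul_eq_mul] at this
        rw [Real.one_rpow] at this
        nlinarith
  calc x ^ s = x * x ^ t := hxs
    _ ≤ x * (((1 : ℝ) / 2) ^ t + (1 - ((1 : ℝ) / 2) ^ t) * x) := by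
        exact mul_le_mul_of_nonneg_left key hx0
    _ = ((1 : ℝ) / 2) ^ t * x + (1 - ((1 : ℝ) / 2) ^ t) * x ^ 2 := by ring

/-- Sharpness over the sphere: half the squared distance of a unit vector `q` to the nearest
signed coordinate vector is controlled by the deficiency `θ − E_Ω ‖q_Ω‖₂^p`. -/
theorem sphere_sharpness (n : ℕ) (p θ : ℝ) (hp : 2 < p) (hθ : θ ∈ Set.Ioo (0 : ℝ) 1)
    (q : Fin (n + 1) → ℝ) (hq : ∑ i, q i ^ 2 = 1) :
    (1 / 2) * (Finset.univ.inf' Finset.univ_nonempty (fun i : Fin (n + 1) =>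
        min (∑ j, (q j - (if j = i then 1 else 0)) ^ 2)
            (∑ j, (q j + (if j = i then 1 else 0)) ^ 2)))
      ≤ (1 - 2 * ((1 : ℝ) / 2) ^ (p / 2))⁻¹ / (θ * (1 - θ)) *
          (θ - ∑ S ∈ (Finset.univ : Finset (Fin (n + 1))).powerset,
            θ ^ S.card * (1 - θ) ^ (n + 1 - S.card) * (∑ i ∈ S, q i ^ 2) ^ (p / 2)) := by
  obtain ⟨hθ0, hθ1⟩ := hθ
  set s : ℝ := p / 2 with hsdef
  have hs : 1 < s := by simp [hsdef]; linarith
  set c : ℝ := 1 - 2 * ((1 : ℝ) / 2) ^ s with hc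
  have hc0 : 0 < c := by
    have : (2 : ℝ) * ((1 : ℝ) / 2) ^ s = ((1 : ℝ) / 2) ^ (s - 1) := by
      have hx : s = 1 + (s - 1) := by ring
      rw [hc] at *
      nth_rewrite 1 [hx]
      rw [Real.rpow_add (by norm_num : (0:ℝ) < 1/2), Real.rpow_one]
      ring
    rw [hc, this]
    have : ((1 : ℝ) / 2) ^ (s - 1) < ((1 : ℝ) / 2) ^ (0 : ℝ) := by
      apply Real.rpow_lt_rpow_of_exponent_gt (by norm_num) (by norm_num)
      linarith
    rw [Real.rpow_zero] at this
    linarith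
  -- pick the index maximizing |q i|
  obtain ⟨i₀, -, hmax⟩ := Finset.exists_max_image Finset.univ (fun i => |q i|) Finset.univ_nonempty
  set M : ℝ := |q i₀| with hM
  have hM1 : M ≤ 1 := by
    have h1 : q i₀ ^ 2 ≤ 1 := by
      rw [← hq]
      exact Finset.single_le_sum (f := fun i => q i ^ 2) (fun i _ => sq_nonneg _) (Finset.mem_univ i₀)
    nlinarith [sq_abs (q i₀), abs_nonneg (q i₀)]
  -- K := ∑ q i ^ 4 ≤ M
  set K : ℝ := ∑ i, (q i ^ 2) ^ 2 with hK
  have hKM : K ≤ M := by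
    have h1 : ∀ i : Fin (n + 1), (q i ^ 2) ^ 2 ≤ q i ^ 2 * M := by
      intro i
      have h2 : q i ^ 2 ≤ M := by
        have := hmax i (Finset.mem_univ i)
        have h3 : q i ^ 2 = |q i| ^ 2 := (sq_abs _).symm
        nlinarith [abs_nonneg (q i)]
      nlinarith [sq_nonneg (q i)]
    calc K ≤ ∑ i, q i ^ 2 * M := Finset.sum_le_sum (fun i _ => h1 i)
      _ = M := by rw [← Finset.sum_mul, hq, one_mul]
  -- LHS ≤ 1 - M
  have hLHS : (1 / 2) * (Finset.univ.inf' Finset.univ_nonempty (fun i : Fin (n + 1) =>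
        min (∑ j, (q j - (if j = i then 1 else 0)) ^ 2)
            (∑ j, (q j + (if j = i then 1 else 0)) ^ 2))) ≤ 1 - M := by
    have hval : ∀ i : Fin (n + 1),
        (∑ j, (q j - (if j = i then 1 else 0)) ^ 2) = 2 - 2 * q i ∧
        (∑ j, (q j + (if j = i then 1 else 0)) ^ 2) = 2 + 2 * q i := by
      intro i
      constructor
      · have : ∀ j : Fin (n+1), (q j - (if j = i then 1 else 0)) ^ 2
            = q j ^ 2 - 2 * (if j = i then q j else 0) + (if j = i then 1 else 0) := by
          intro j; by_cases h : j = i <;> simp [h] <;> ring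
        rw [Finset.sum_congr rfl (fun j _ => this j)]
        rw [Finset.sum_add_distrib, Finset.sum_sub_distrib, hq, ← Finset.mul_sum,
          Finset.sum_ite_eq' _ i (fun j => q j), Finset.sum_ite_eq' _ i (fun _ => (1:ℝ))]
        simp
        ring
      · have : ∀ j : Fin (n+1), (q j + (if j = i then 1 else 0)) ^ 2
            = q j ^ 2 + 2 * (if j = i then q j else 0) + (if j = i then 1 else 0) := by
          intro j; by_cases h : j = i <;> simp [h] <;> ring
        rw [Finset.sum_congr rfl (fun j _ => this j)]
        rw [Finset.sum_add_distrib, Finset.sum_add_distrib, hq, ← Finset.mul_sum,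
          Finset.sum_ite_eq' _ i (fun j => q j), Finset.sum_ite_eq' _ i (fun _ => (1:ℝ))]
        simp
        ring
    have hinf : (Finset.univ.inf' Finset.univ_nonempty (fun i : Fin (n + 1) =>
        min (∑ j, (q j - (if j = i then 1 else 0)) ^ 2)
            (∑ j, (q j + (if j = i then 1 else 0)) ^ 2)))
        ≤ min (2 - 2 * q i₀) (2 + 2 * q i₀) := by
      have := Finset.inf'_le (f := (fun i : Fin (n + 1) =>
        min (∑ j, (q j - (if j = i then 1 else 0)) ^ 2)
            (∑ j, (q j + (if j = i then 1 else 0)) ^ 2))) (b := i₀) (Finset.mem_univ i₀)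
      rw [(hval i₀).1, (hval i₀).2] at this
      exact this
    have hminM : min (2 - 2 * q i₀) (2 + 2 * q i₀) = 2 - 2 * M := by
      rcases le_total (q i₀) 0 with h | h
      · rw [hM, abs_of_nonpos h, min_eq_right (by linarith)]; ring
      · rw [hM, abs_of_nonneg h, min_eq_left (by linarith)]
    rw [hminM] at hinf
    linarith
  -- expectation bound
  set E : ℝ := ∑ S ∈ (Finset.univ : Finset (Fin (n + 1))).powerset,
      θ ^ S.card * (1 - θ) ^ (n + 1 - S.card) * (∑ i ∈ S, q i ^ 2) ^ s with hE
  have hcard : (Finset.univ : Finset (Fin (n + 1))).card = n + 1 := by simp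
  have hEbound : E ≤ θ - c * (θ * (1 - θ)) * (1 - K) := by
    have hterm : ∀ S ∈ (Finset.univ : Finset (Fin (n + 1))).powerset,
        θ ^ S.card * (1 - θ) ^ (n + 1 - S.card) * (∑ i ∈ S, q i ^ 2) ^ s
        ≤ θ ^ S.card * (1 - θ) ^ (n + 1 - S.card) *
          ((1 - c) * (∑ i ∈ S, q i ^ 2) + c * (∑ i ∈ S, q i ^ 2) ^ 2) := by
      intro S _
      have hx0 : (0 : ℝ) ≤ ∑ i ∈ S, q i ^ 2 := Finset.sum_nonneg (fun i _ => sq_nonneg _)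
      have hx1 : (∑ i ∈ S, q i ^ 2) ≤ 1 := by
        rw [← hq]
        exact Finset.sum_le_sum_of_subset_of_nonneg (Finset.subset_univ S)
          (fun i _ _ => sq_nonneg _)
      have hw : (0 : ℝ) ≤ θ ^ S.card * (1 - θ) ^ (n + 1 - S.card) :=
        mul_nonneg (pow_nonneg hθ0.le _) (pow_nonneg (by linarith) _)
      have hpt := key_pointwise hs hx0 hx1
      have : (∑ i ∈ S, q i ^ 2) ^ s
          ≤ (1 - c) * (∑ i ∈ S, q i ^ 2) + c * (∑ i ∈ S, q i ^ 2) ^ 2 := by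
        have h1c : 1 - c = 2 * ((1:ℝ)/2) ^ s := by rw [hc]; ring
        rw [h1c, hc]
        exact hpt
      exact mul_le_mul_of_nonneg_left this hw
    have hsum := Finset.sum_le_sum hterm
    rw [← hE] at hsum
    have hsplit : ∑ S ∈ (Finset.univ : Finset (Fin (n + 1))).powerset,
        θ ^ S.card * (1 - θ) ^ (n + 1 - S.card) *
          ((1 - c) * (∑ i ∈ S, q i ^ 2) + c * (∑ i ∈ S, q i ^ 2) ^ 2)
        = (1 - c) * (θ * 1) + c * (θ ^ 2 * 1 ^ 2 + θ * (1 - θ) * K) := by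
      have e1 := bern_mean θ (Finset.univ : Finset (Fin (n + 1))) (fun i => q i ^ 2)
      have e2 := bern_sq θ (Finset.univ : Finset (Fin (n + 1))) (fun i => q i ^ 2)
      rw [hcard] at e1 e2
      rw [hq] at e1 e2
      have : ∀ S ∈ (Finset.univ : Finset (Fin (n + 1))).powerset,
          θ ^ S.card * (1 - θ) ^ (n + 1 - S.card) *
            ((1 - c) * (∑ i ∈ S, q i ^ 2) + c * (∑ i ∈ S, q i ^ 2) ^ 2)
          = (1 - c) * (θ ^ S.card * (1 - θ) ^ (n + 1 - S.card) * (∑ i ∈ S, q i ^ 2))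
            + c * (θ ^ S.card * (1 - θ) ^ (n + 1 - S.card) * (∑ i ∈ S, q i ^ 2) ^ 2) := by
        intro S _; ring
      rw [Finset.sum_congr rfl this, Finset.sum_add_distrib, ← Finset.mul_sum, ← Finset.mul_sum,
        e1, e2, ← hK]
    rw [hsplit] at hsum
    calc E ≤ (1 - c) * (θ * 1) + c * (θ ^ 2 * 1 ^ 2 + θ * (1 - θ) * K) := hsum
      _ = θ - c * (θ * (1 - θ)) * (1 - K) := by ring
  -- combine
  have hθθ : 0 < θ * (1 - θ) := mul_pos hθ0 (by linarith)
  have hdef : c * (θ * (1 - θ)) * (1 - K) ≤ θ - E := by linarith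
  have hfinal : 1 - K ≤ c⁻¹ / (θ * (1 - θ)) * (θ - E) := by
    rw [div_mul_eq_mul_div, le_div_iff₀ hθθ]
    calc (1 - K) * (θ * (1 - θ)) = c⁻¹ * (c * (θ * (1 - θ)) * (1 - K)) := by
          field_simp
      _ ≤ c⁻¹ * (θ - E) := by
          apply mul_le_mul_of_nonneg_left hdef (inv_nonneg.mpr hc0.le)
      _ = c⁻¹ * (θ - E) := rfl
  calc (1 / 2) * (Finset.univ.inf' Finset.univ_nonempty (fun i : Fin (n + 1) =>
        min (∑ j, (q j - (if j = i then 1 else 0)) ^ 2)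
            (∑ j, (q j + (if j = i then 1 else 0)) ^ 2)))
      ≤ 1 - M := hLHS
    _ ≤ 1 - K := by linarith
    _ ≤ c⁻¹ / (θ * (1 - θ)) * (θ - E) := hfinal
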